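/- Let d ≥ 1 and let β, λ ≥ 1 be parameters, and let G = ([n],[m],E) be a d-left-bounded bipartite graph. If λ ≥ 2d·(2dβ+1)^{2d}, then there exists a set S ⊆ [m] such that deleting the right vertices in S (and their incident edges) produces a bipartite graph containing r pairwise non-connected left vertices, where |S| ≤ r/β and r ≥ n/λ. -/

import Mathlib

open Finset

def tow : ℕ → ℕ
  | 0 => 1
  | x + 1 => 2 ^ tow x

def hw {ι : Type*} [Fintype ι] (x : ι → Bool) : ℕ :=
  (Finset.univ.filter fun i => x i = true).card

def IsLocal {κ ι : Type*} (d : ℕ) (f : (κ → Bool) → ι → Bool) : Prop :=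
  ∀ i : ι, ∃ T : Finset κ, T.card ≤ d ∧
    ∀ x y : κ → Bool, (∀ j ∈ T, x j = y j) → f x i = f y i

def IsProductDist {κ : Type*} [Fintype κ] (p : (κ → Bool) → ℝ) : Prop :=
  ∃ γ : κ → ℝ, (∀ j, 0 ≤ γ j ∧ γ j ≤ 1) ∧
    ∀ x, p x = ∏ j, if x j then γ j else 1 - γ j

def IsDist {α : Type*} [Fintype α] (p : α → ℝ) : Prop :=
  (∀ a, 0 ≤ p a) ∧ ∑ a, p a = 1

noncomputable def push {α β : Type*} [Fintype α] [DecidableEq β] (f : α → β) (p : α → ℝ) :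
    β → ℝ :=
  fun b => ∑ a, if f a = b then p a else 0

noncomputable def tv {α : Type*} [Fintype α] (p q : α → ℝ) : ℝ :=
  (1 / 2) * ∑ a, |p a - q a|

noncomputable def biased {ι : Type*} [Fintype ι] (γ : ℝ) (x : ι → Bool) : ℝ :=
  ∏ i, if x i then γ else 1 - γ

noncomputable def unifParity (ι : Type*) [Fintype ι] [DecidableEq ι] (b : ℕ)
    (y : ι → Bool) : ℝ :=
  if hw y % 2 = b then
    (1 : ℝ) / ((Finset.univ.filter fun z : ι → Bool => hw z % 2 = b).card : ℝ)
  else 0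

noncomputable def dHard (n m : ℕ) (p : (Fin n → Bool) × (Fin m → Bool)) : ℝ :=
  biased (1 / 4) p.1 *
    (if hw p.1 % 2 = 1 then (1 / 2 : ℝ) ^ m
     else unifParity (Fin m) ((hw p.1 / 2) % 2) p.2)

def splitFun (n m : ℕ) (z : Fin (n + m) → Bool) : (Fin n → Bool) × (Fin m → Bool) :=
  (fun i => z (Fin.castAdd m i), fun j => z (Fin.natAdd n j))

noncomputable def dHard' (n m : ℕ) (z : Fin (n + m) → Bool) : ℝ :=
  dHard n m (splitFun n m z)

def wOf {V : Type*} (Z : V → Bool) : Sym2 V → Bool :=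
  Sym2.lift ⟨fun u v => xor (Z u) (Z v), fun u v => Bool.xor_comm _ _⟩

def ip {V : Type*} [Fintype V] (Z X : V → Bool) : ℕ :=
  (Finset.univ.filter fun v => Z v = true ∧ X v = true).card

noncomputable def dHost {V : Type*} [Fintype V] [DecidableEq V] (G : SimpleGraph V)
    [DecidableRel G.Adj] (z : (V ⊕ V ⊕ G.edgeSet) → Bool) : ℝ :=
  let X : V → Bool := fun v => z (Sum.inl v)
  let Y : V → Bool := fun v => z (Sum.inr (Sum.inl v))
  let W : G.edgeSet → Bool := fun e => z (Sum.inr (Sum.inr e))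
  biased (1 / 4) X *
    ∑ Z : V → Bool,
      (1 / 2 : ℝ) ^ (Fintype.card V) *
        (if ∀ e : G.edgeSet, W e = wOf Z e.1 then 1 else 0) *
        (if hw X % 2 = 1 then (1 / 2 : ℝ) ^ (Fintype.card V)
         else unifParity V ((ip Z X + hw X / 2) % 2) Y)

namespace EGI
open Finset

open Finset

noncomputable def pr (K : ℝ) : ℕ → ℝ × ℝ
  | 0 => (0, 1)
  | k+1 =>
    (K * ((pr K k).2 + 2*((k:ℝ)+1)*(pr K k).1),
     (pr K k).2 + 2*((k:ℝ)+1)*(K * ((pr K k).2 + 2*((k:ℝ)+1)*(pr K k).1)) + 1)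

noncomputable def th (K : ℝ) (k : ℕ) : ℝ := (pr K k).1
noncomputable def La (K : ℝ) (k : ℕ) : ℝ := (pr K k).2

lemma th_zero (K : ℝ) : th K 0 = 0 := rfl
lemma La_zero (K : ℝ) : La K 0 = 1 := rfl
lemma th_succ (K : ℝ) (k : ℕ) : th K (k+1) = K * (La K k + 2*((k:ℝ)+1)*th K k) := rfl
lemma La_succ (K : ℝ) (k : ℕ) : La K (k+1) = La K k + 2*((k:ℝ)+1)*th K (k+1) + 1 := rfl

lemma th_La_pos (K : ℝ) (hK : 1 ≤ K) : ∀ k, 0 ≤ th K k ∧ 1 ≤ La K k := by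
  intro k
  induction k with
  | zero => simp [th_zero, La_zero]
  | succ k ih =>
    obtain ⟨h1, h2⟩ := ih
    have hk1 : (1:ℝ) ≤ (k:ℝ)+1 := by
      have : (0:ℝ) ≤ (k:ℝ) := Nat.cast_nonneg k
      linarith
    constructor
    · rw [th_succ]
      have hz : (0:ℝ) ≤ La K k + 2*((k:ℝ)+1)*th K k := by nlinarith
      nlinarith
    · rw [La_succ]
      nlinarith [mul_nonneg (mul_nonneg (by positivity : (0:ℝ) ≤ 2*((k:ℝ)+1)) (by linarith : (0:ℝ) ≤ K)) (by nlinarith : (0:ℝ) ≤ La K k + 2*((k:ℝ)+1)*th K k), th_succ K k]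

lemma th_nn (K : ℝ) (hK : 1 ≤ K) (k : ℕ) : 0 ≤ th K k := (th_La_pos K hK k).1
lemma La_one (K : ℝ) (hK : 1 ≤ K) (k : ℕ) : 1 ≤ La K k := (th_La_pos K hK k).2
lemma La_nn (K : ℝ) (hK : 1 ≤ K) (k : ℕ) : 0 ≤ La K k := le_trans zero_le_one (La_one K hK k)

lemma th_double (K : ℝ) (hK : 1 ≤ K) (k : ℕ) : 2 * th K k ≤ th K (k+1) := by
  rw [th_succ]
  have h1 := th_nn K hK k
  have h2 := La_one K hK k
  have hk1 : (1:ℝ) ≤ (k:ℝ)+1 := by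
    have : (0:ℝ) ≤ (k:ℝ) := Nat.cast_nonneg k
    linarith
  nlinarith [mul_nonneg (by linarith : (0:ℝ) ≤ K - 1) (by nlinarith : (0:ℝ) ≤ La K k + 2*((k:ℝ)+1)*th K k)]

lemma th_mono (K : ℝ) (hK : 1 ≤ K) : ∀ {a b : ℕ}, a ≤ b → th K a ≤ th K b := by
  intro a b h
  induction b with
  | zero => simp_all
  | succ b ih =>
    rcases Nat.lt_or_ge a (b+1) with h' | h'
    · have := ih (by omega)
      have := th_double K hK b
      have := th_nn K hK b
      linarith
    · have : a = b+1 := by omega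
      simp [this]

lemma La_mono (K : ℝ) (hK : 1 ≤ K) : ∀ {a b : ℕ}, a ≤ b → La K a ≤ La K b := by
  intro a b h
  induction b with
  | zero => simp_all
  | succ b ih =>
    rcases Nat.lt_or_ge a (b+1) with h' | h'
    · have h1 := ih (by omega)
      have h2 := th_nn K hK (b+1)
      have : (0:ℝ) ≤ 2*((b:ℝ)+1) := by positivity
      rw [La_succ]
      nlinarith
    · have : a = b+1 := by omega
      simp [this]

lemma two_pow_th (K : ℝ) (hK : 1 ≤ K) : ∀ (s j : ℕ), (2:ℝ)^s * th K j ≤ th K (j+s) := by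
  intro s
  induction s with
  | zero => intro j; simp
  | succ s ih =>
    intro j
    have h1 := ih j
    have h2 := th_double K hK (j+s)
    have h3 := th_nn K hK j
    calc (2:ℝ)^(s+1) * th K j = 2 * ((2:ℝ)^s * th K j) := by ring
    _ ≤ 2 * th K (j+s) := by nlinarith
    _ ≤ th K (j+s+1) := h2

lemma th_weight (K : ℝ) (hK : 1 ≤ K) {b k : ℕ} (hb : 1 ≤ b) (hbk : b ≤ k) :
    (b:ℝ) * th K (k-b) ≤ 2 * th K (k-1) := by
  have h1 := two_pow_th K hK (b-1) (k-b)
  have he : (k-b)+(b-1) = k-1 := by omega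
  rw [he] at h1
  have hb2 : (b:ℝ) ≤ 2 * 2^(b-1) := by
    have : b < 2^b := Nat.lt_two_pow_self
    have hb' : 2^b = 2 * 2^(b-1) := by
      conv_lhs => rw [show b = (b-1)+1 by omega]
      ring
    have : (b:ℝ) < ((2^b : ℕ) : ℝ) := by exact_mod_cast this
    rw [hb'] at this
    push_cast at this
    linarith
  have h3 := th_nn K hK (k-b)
  nlinarith

variable {n m : ℕ}

def degA (J : Fin n → Finset (Fin m)) (A : Finset (Fin n)) (j : Fin m) : ℕ :=
  (A.filter (fun i => j ∈ J i)).card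

lemma degA_mono (J : Fin n → Finset (Fin m)) {A' A : Finset (Fin n)} (h : A' ⊆ A) (j : Fin m) :
    degA J A' j ≤ degA J A j :=
  card_le_card (filter_subset_filter _ h)

lemma degA_sum (J : Fin n → Finset (Fin m)) (A : Finset (Fin n)) (B : Finset (Fin m)) :
    ∑ j ∈ B, degA J A j = ∑ i ∈ A, (J i ∩ B).card := by
  unfold degA
  have h1 : ∀ j, (A.filter (fun i => j ∈ J i)).card = ∑ i ∈ A, if j ∈ J i then 1 else 0 := by
    intro j; rw [Finset.card_filter]
  have h2 : ∀ i, (J i ∩ B).card = ∑ j ∈ B, if j ∈ J i then 1 else 0 := by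
    intro i
    rw [show J i ∩ B = B.filter (fun j => j ∈ J i) by
      ext x; simp [Finset.mem_inter, Finset.mem_filter, and_comm]]
    rw [Finset.card_filter]
  simp only [h1, h2]
  exact Finset.sum_comm

lemma degA_pos (J : Fin n → Finset (Fin m)) (A : Finset (Fin n)) {i : Fin n} {j : Fin m}
    (hi : i ∈ A) (hj : j ∈ J i) : 0 < degA J A j := by
  apply Finset.card_pos.mpr
  exact ⟨i, Finset.mem_filter.mpr ⟨hi, hj⟩⟩

noncomputable def pcost (K : ℝ) (k : ℕ) (J : Fin n → Finset (Fin m)) (A : Finset (Fin n))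
    (P : Finset (Fin m)) : ℝ :=
  ∑ p ∈ P, min ((degA J A p : ℝ)) (th K k)

lemma pcost_nonneg (K : ℝ) (hK : 1 ≤ K) (k : ℕ) (J : Fin n → Finset (Fin m))
    (A : Finset (Fin n)) (P : Finset (Fin m)) : 0 ≤ pcost K k J A P :=
  Finset.sum_nonneg fun p _ => le_min (Nat.cast_nonneg _) (th_nn K hK k)

lemma pcost_mono (K : ℝ) (k : ℕ) (J : Fin n → Finset (Fin m)) {A' A : Finset (Fin n)}
    (h : A' ⊆ A) (P : Finset (Fin m)) : pcost K k J A' P ≤ pcost K k J A P := by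
  apply Finset.sum_le_sum
  intro p _
  apply min_le_min _ le_rfl
  exact_mod_cast degA_mono J h p

lemma sum_union_le' {α : Type*} [DecidableEq α] {s t : Finset α} {f : α → ℝ}
    (hf : ∀ x, 0 ≤ f x) : ∑ x ∈ s ∪ t, f x ≤ ∑ x ∈ s, f x + ∑ x ∈ t, f x := by
  have h : (∑ x ∈ s ∪ t, f x) + ∑ x ∈ s ∩ t, f x = (∑ x ∈ s, f x) + ∑ x ∈ t, f x :=
    Finset.sum_union_inter
  have h2 : 0 ≤ ∑ x ∈ s ∩ t, f x := Finset.sum_nonneg fun x _ => hf x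
  linarith

lemma pcost_le (K : ℝ) (hK : 1 ≤ K) (k : ℕ) (J : Fin n → Finset (Fin m))
    (A : Finset (Fin n)) (P : Finset (Fin m)) : pcost K k J A P ≤ (P.card : ℝ) * th K k := by
  calc pcost K k J A P ≤ ∑ _p ∈ P, th K k :=
        Finset.sum_le_sum (fun p _ => min_le_right _ _)
  _ = (P.card : ℝ) * th K k := by rw [Finset.sum_const, nsmul_eq_mul]

def Goal (K : ℝ) (k : ℕ) (J : Fin n → Finset (Fin m)) (A : Finset (Fin n))
    (P : Finset (Fin m)) : Prop :=
  ∃ Q S, Q ⊆ A ∧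
    (∀ q₁ ∈ Q, ∀ q₂ ∈ Q, q₁ ≠ q₂ → J q₁ ∩ J q₂ ⊆ S) ∧
    (∀ q ∈ Q, J q ∩ P ⊆ S) ∧
    (K * S.card ≤ ∑ q ∈ Q, ((J q ∩ S).card : ℝ)) ∧
    ((A.card : ℝ) ≤ La K k * Q.card + pcost K k J A P)

def AuxGoal (K : ℝ) (t b : ℕ) (J : Fin n → Finset (Fin m)) (B : Finset (Fin m))
    (W : Finset (Fin n)) (Pin : Finset (Fin m)) : Prop :=
  ∃ Q S, Q ⊆ W ∧
    (∀ q₁ ∈ Q, ∀ q₂ ∈ Q, q₁ ≠ q₂ → (J q₁ \ B) ∩ (J q₂ \ B) ⊆ S) ∧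
    (∀ q ∈ Q, (J q \ B) ∩ Pin ⊆ S) ∧
    (K * S.card ≤ ∑ q ∈ Q, (((J q \ B) ∩ S).card : ℝ)) ∧
    ((∑ i ∈ W, ((J i ∩ B).card : ℝ)) ≤
      (La K t + 2*(t:ℝ)*th K t) * (∑ q ∈ Q, ((J q ∩ B).card : ℝ)) + 2*(b:ℝ)*(th K t) * Pin.card)

lemma goal_empty (K : ℝ) (hK : 1 ≤ K) (k : ℕ) (J : Fin n → Finset (Fin m))
    (P : Finset (Fin m)) : Goal K k J ∅ P := by
  refine ⟨∅, ∅, Finset.Subset.refl _, by simp, by simp, by simp, ?_⟩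
  have := pcost_nonneg K hK k J (∅ : Finset (Fin n)) P
  simp only [Finset.card_empty, Nat.cast_zero]
  linarith

set_option maxHeartbeats 2000000 in
theorem aux (K : ℝ) (hK : 1 ≤ K) (t : ℕ)
    (IH : ∀ k' ≤ t, ∀ (J : Fin n → Finset (Fin m)) (A : Finset (Fin n)) (P : Finset (Fin m)),
        (∀ i ∈ A, (J i).card ≤ k') → Goal K k' J A P)
    (J : Fin n → Finset (Fin m)) (B : Finset (Fin m)) :
    ∀ b, b ≤ t+1 → ∀ (W : Finset (Fin n)) (Pin : Finset (Fin m)),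
      (∀ i ∈ W, 1 ≤ (J i ∩ B).card ∧ (J i ∩ B).card ≤ b ∧ (J i).card ≤ t+1) →
      AuxGoal K t b J B W Pin := by
  intro b
  induction b with
  | zero =>
    intro _ W Pin hW
    have hWe : W = ∅ := by
      apply Finset.eq_empty_of_forall_notMem
      intro i hi
      obtain ⟨h1, h2, _⟩ := hW i hi
      omega
    subst hWe
    refine ⟨∅, ∅, Finset.Subset.refl _, by simp, by simp, by simp, ?_⟩
    have h1 := th_nn K hK t
    have h2 := La_nn K hK t
    simp
  | succ b IHb =>
    intro hb W Pin hW
    classical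
    set Wb := W.filter (fun i => (J i ∩ B).card = b+1) with hWbdef
    set Wr := W.filter (fun i => ¬((J i ∩ B).card = b+1)) with hWrdef
    have hWbsub : Wb ⊆ W := Finset.filter_subset _ _
    have hWrsub : Wr ⊆ W := Finset.filter_subset _ _
    have hdisj : Disjoint Wb Wr := Finset.disjoint_filter_filter_not W W _
    have hcall : ∀ i ∈ Wb, ((fun i => J i \ B) i).card ≤ t - b := by
      intro i hi
      obtain ⟨h1, h2, h3⟩ := hW i (hWbsub hi)
      have he : (J i ∩ B).card = b+1 := (Finset.mem_filter.mp hi).2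
      have hc := Finset.card_inter_add_card_sdiff (J i) B
      simp only []
      omega
    obtain ⟨Qb, Sb, hQbsub, hiib, hiiib, hivb, hvb⟩ :=
      IH (t-b) (by omega) (fun i => J i \ B) Wb Pin hcall
    set U := Qb.biUnion (fun q => (J q \ B) \ Sb) with hUdef
    have hWrcall : ∀ i ∈ Wr, 1 ≤ (J i ∩ B).card ∧ (J i ∩ B).card ≤ b ∧ (J i).card ≤ t+1 := by
      intro i hi
      obtain ⟨h1, h2, h3⟩ := hW i (hWrsub hi)
      have := (Finset.mem_filter.mp hi).2
      exact ⟨h1, by omega, h3⟩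
    obtain ⟨Qr, Sr, hQrsub, hiir, hiiir, hivr, hvr⟩ :=
      IHb (by omega) Wr (Pin ∪ U) hWrcall
    have hdQ : Disjoint Qb Qr := hdisj.mono hQbsub hQrsub
    refine ⟨Qb ∪ Qr, Sb ∪ Sr, Finset.union_subset (hQbsub.trans hWbsub) (hQrsub.trans hWrsub),
      ?_, ?_, ?_, ?_⟩
    · intro q₁ h₁ q₂ h₂ hne
      rcases Finset.mem_union.mp h₁ with h₁' | h₁' <;>
        rcases Finset.mem_union.mp h₂ with h₂' | h₂'
      · exact (hiib q₁ h₁' q₂ h₂' hne).trans Finset.subset_union_left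
      · intro x hx
        obtain ⟨hx1, hx2⟩ := Finset.mem_inter.mp hx
        by_cases hxS : x ∈ Sb
        · exact Finset.mem_union_left _ hxS
        · have hxU : x ∈ U := Finset.mem_biUnion.mpr ⟨q₁, h₁', Finset.mem_sdiff.mpr ⟨hx1, hxS⟩⟩
          exact Finset.mem_union_right _
            (hiiir q₂ h₂' (Finset.mem_inter.mpr ⟨hx2, Finset.mem_union_right _ hxU⟩))
      · intro x hx
        obtain ⟨hx1, hx2⟩ := Finset.mem_inter.mp hx
        by_cases hxS : x ∈ Sb
        · exact Finset.mem_union_left _ hxS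
        · have hxU : x ∈ U := Finset.mem_biUnion.mpr ⟨q₂, h₂', Finset.mem_sdiff.mpr ⟨hx2, hxS⟩⟩
          exact Finset.mem_union_right _
            (hiiir q₁ h₁' (Finset.mem_inter.mpr ⟨hx1, Finset.mem_union_right _ hxU⟩))
      · exact (hiir q₁ h₁' q₂ h₂' hne).trans Finset.subset_union_right
    · intro q hq
      rcases Finset.mem_union.mp hq with hq' | hq'
      · exact (hiiib q hq').trans Finset.subset_union_left
      · intro x hx
        obtain ⟨hx1, hx2⟩ := Finset.mem_inter.mp hx
        exact Finset.mem_union_right _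
          (hiiir q hq' (Finset.mem_inter.mpr ⟨hx1, Finset.mem_union_left _ hx2⟩))
    · have hc1 : ((Sb ∪ Sr).card : ℝ) ≤ (Sb.card : ℝ) + Sr.card := by
        exact_mod_cast Finset.card_union_le Sb Sr
      have hm1 : ∀ q ∈ Qb, (((J q \ B) ∩ Sb).card : ℝ) ≤ (((J q \ B) ∩ (Sb ∪ Sr)).card : ℝ) := by
        intro q _
        exact_mod_cast Finset.card_le_card
          (Finset.inter_subset_inter (Finset.Subset.refl _) Finset.subset_union_left)
      have hm2 : ∀ q ∈ Qr, (((J q \ B) ∩ Sr).card : ℝ) ≤ (((J q \ B) ∩ (Sb ∪ Sr)).card : ℝ) := by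
        intro q _
        exact_mod_cast Finset.card_le_card
          (Finset.inter_subset_inter (Finset.Subset.refl _) Finset.subset_union_right)
      have hs1 := Finset.sum_le_sum hm1
      have hs2 := Finset.sum_le_sum hm2
      rw [Finset.sum_union hdQ]
      have hK0 : (0:ℝ) ≤ K := le_trans zero_le_one hK
      have hc2 := mul_le_mul_of_nonneg_left hc1 hK0
      linarith [hivb, hivr, hs1, hs2, hc2]
    · -- value inequality
      have hθ' : 0 ≤ th K t := th_nn K hK t
      have hLat : 0 ≤ La K t := La_nn K hK t
      have htc : (0:ℝ) ≤ (t:ℝ) := Nat.cast_nonneg t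
      have hbc : (0:ℝ) ≤ (b:ℝ) := Nat.cast_nonneg b
      have hsumW : ∑ i ∈ W, ((J i ∩ B).card:ℝ) =
          (∑ i ∈ Wb, ((J i ∩ B).card:ℝ)) + ∑ i ∈ Wr, ((J i ∩ B).card:ℝ) :=
        (Finset.sum_filter_add_sum_filter_not W _ _).symm
      have hWbconst : ∑ i ∈ Wb, ((J i ∩ B).card:ℝ) = ((b:ℝ)+1) * Wb.card := by
        have h2 : ∀ i ∈ Wb, ((J i ∩ B).card : ℝ) = (b:ℝ)+1 := by
          intro i hi
          rw [(Finset.mem_filter.mp hi).2]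
          push_cast
          ring
        rw [Finset.sum_congr rfl h2, Finset.sum_const, nsmul_eq_mul]
        ring
      have hQbconst : ∑ q ∈ Qb, ((J q ∩ B).card:ℝ) = ((b:ℝ)+1) * Qb.card := by
        have h2 : ∀ q ∈ Qb, ((J q ∩ B).card : ℝ) = (b:ℝ)+1 := by
          intro q hq
          rw [(Finset.mem_filter.mp (hQbsub hq)).2]
          push_cast
          ring
        rw [Finset.sum_congr rfl h2, Finset.sum_const, nsmul_eq_mul]
        ring
      have hsumQ : ∑ q ∈ Qb ∪ Qr, ((J q ∩ B).card:ℝ) =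
          (∑ q ∈ Qb, ((J q ∩ B).card:ℝ)) + ∑ q ∈ Qr, ((J q ∩ B).card:ℝ) :=
        Finset.sum_union hdQ
      have hQbnn : (0:ℝ) ≤ Qb.card := Nat.cast_nonneg _
      have hPinn : (0:ℝ) ≤ Pin.card := Nat.cast_nonneg _
      -- P1
      have hpc := pcost_le K hK (t-b) (fun i => J i \ B) Wb Pin
      have P1 : ((b:ℝ)+1) * (Wb.card:ℝ) ≤
          ((b:ℝ)+1) * (La K (t-b) * Qb.card) + ((b:ℝ)+1) * ((Pin.card:ℝ) * th K (t-b)) := by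
        have h := hvb
        nlinarith [h, hpc]
      -- P2
      have P2 : ((b:ℝ)+1) * (La K (t-b) * Qb.card) ≤ La K t * (((b:ℝ)+1) * Qb.card) := by
        have hmono := La_mono K hK (Nat.sub_le t b)
        have h0 : (0:ℝ) ≤ ((b:ℝ)+1) * Qb.card := mul_nonneg (by linarith) hQbnn
        calc ((b:ℝ)+1) * (La K (t-b) * Qb.card)
            = La K (t-b) * (((b:ℝ)+1) * Qb.card) := by ring
        _ ≤ La K t * (((b:ℝ)+1) * Qb.card) := mul_le_mul_of_nonneg_right hmono h0
      -- P3
      have P3 : ((b:ℝ)+1) * ((Pin.card:ℝ) * th K (t-b)) ≤ 2 * th K t * Pin.card := by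
        have hw := th_weight K hK (b := b+1) (k := t+1) (by omega) (by omega)
        have he1 : (t+1)-(b+1) = t-b := by omega
        have he2 : (t+1)-1 = t := by omega
        rw [he1, he2] at hw
        push_cast at hw
        nlinarith [th_nn K hK (t-b)]
      -- P4/P5 union card
      have P5 : ((Pin ∪ U).card : ℝ) ≤ (Pin.card:ℝ) + U.card := by
        exact_mod_cast Finset.card_union_le Pin U
      -- P6 : U.card bound
      have hUcard : (U.card : ℝ) ≤ ((t-b:ℕ):ℝ) * Qb.card := by
        have h1 : U.card ≤ ∑ q ∈ Qb, ((J q \ B) \ Sb).card := Finset.card_biUnion_le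
        have h2 : ∑ q ∈ Qb, ((J q \ B) \ Sb).card ≤ ∑ q ∈ Qb, (t-b) := by
          apply Finset.sum_le_sum
          intro q hq
          exact le_trans (Finset.card_le_card (Finset.sdiff_subset)) (hcall q (hQbsub hq))
        have h3 : ∑ _q ∈ Qb, (t-b) = Qb.card * (t-b) := by
          rw [Finset.sum_const, smul_eq_mul]
        have : U.card ≤ Qb.card * (t-b) := by omega
        calc (U.card : ℝ) ≤ ((Qb.card * (t-b) : ℕ) : ℝ) := by exact_mod_cast this
        _ = ((t-b:ℕ):ℝ) * Qb.card := by push_cast; ring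
      have P6 : 2*(b:ℝ)*th K t*(U.card:ℝ) ≤ 2*th K t*((t:ℝ)*(((b:ℝ)+1) * Qb.card)) := by
        have hnat : b * (t-b) ≤ t * (b+1) := by
          calc b * (t-b) ≤ b * t := Nat.mul_le_mul_left b (Nat.sub_le t b)
          _ ≤ t * (b+1) := by rw [Nat.mul_comm]; exact Nat.mul_le_mul_left t (by omega)
        have hcast : (b:ℝ) * ((t-b:ℕ):ℝ) ≤ (t:ℝ) * ((b:ℝ)+1) := by
          have := hnat
          have h' : ((b * (t-b) : ℕ):ℝ) ≤ ((t * (b+1) : ℕ):ℝ) := by exact_mod_cast this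
          push_cast at h'
          linarith
        have e1 : (b:ℝ)*(U.card:ℝ) ≤ (b:ℝ)*(((t-b:ℕ):ℝ)*(Qb.card:ℝ)) :=
          mul_le_mul_of_nonneg_left hUcard hbc
        have e3 : ((b:ℝ)*((t-b:ℕ):ℝ))*(Qb.card:ℝ) ≤ ((t:ℝ)*((b:ℝ)+1))*(Qb.card:ℝ) :=
          mul_le_mul_of_nonneg_right hcast hQbnn
        have e4 : (b:ℝ)*(U.card:ℝ) ≤ (t:ℝ)*(((b:ℝ)+1)*(Qb.card:ℝ)) := by nlinarith [e1, e3]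
        have h2T : (0:ℝ) ≤ 2*th K t := by linarith
        calc 2*(b:ℝ)*th K t*(U.card:ℝ) = 2*th K t*((b:ℝ)*(U.card:ℝ)) := by ring
        _ ≤ 2*th K t*((t:ℝ)*(((b:ℝ)+1) * Qb.card)) := mul_le_mul_of_nonneg_left e4 h2T
      -- final assembly
      have P5' := mul_le_mul_of_nonneg_left P5
        (mul_nonneg (mul_nonneg (by norm_num : (0:ℝ) ≤ 2) hbc) hθ')
      rw [hsumW, hWbconst, hsumQ, hQbconst]
      push_cast
      linarith [hvr, P1, P2, P3, P6, P5']

set_option maxHeartbeats 2000000 in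
theorem main (K : ℝ) (hK : 1 ≤ K) :
    ∀ k N (J : Fin n → Finset (Fin m)) (A : Finset (Fin n)) (P : Finset (Fin m)),
      A.card ≤ N → (∀ i ∈ A, (J i).card ≤ k) → Goal K k J A P := by
  intro k
  induction k using Nat.strong_induction_on with
  | _ k IHk =>
  match k with
  | 0 =>
    intro N J A P _ hcard
    refine ⟨A, ∅, Finset.Subset.refl A, ?_, ?_, by simp, ?_⟩
    · intro q₁ h₁ q₂ h₂ _
      have : J q₁ = ∅ := Finset.card_eq_zero.mp (Nat.le_zero.mp (hcard q₁ h₁))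
      simp [this]
    · intro q hq
      have : J q = ∅ := Finset.card_eq_zero.mp (Nat.le_zero.mp (hcard q hq))
      simp [this]
    · have h1 : La K 0 = 1 := rfl
      have h2 := pcost_nonneg K hK 0 J A P
      rw [h1]
      linarith
  | (t+1) =>
    intro N
    induction N with
    | zero =>
      intro J A P hA _
      have : A = ∅ := Finset.card_eq_zero.mp (Nat.le_zero.mp hA)
      subst this
      exact goal_empty K hK _ J P
    | succ N IHN =>
      intro J A P hA hcard
      by_cases hA0 : A = ∅
      · subst hA0; exact goal_empty K hK _ J P
      -- C1
      by_cases hC1 : ∃ p ∈ P, 0 < degA J A p ∧ (degA J A p : ℝ) < th K (t+1)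
      · obtain ⟨p, hp, hdpos, hdlt⟩ := hC1
        set Ap := A.filter (fun i => p ∈ J i) with hApdef
        set A' := A \ Ap with hA'def
        have hApsub : Ap ⊆ A := Finset.filter_subset _ _
        have hA'sub : A' ⊆ A := Finset.sdiff_subset
        have hcards : A'.card + Ap.card = A.card := Finset.card_sdiff_add_card_eq_card hApsub
        have hApcard : Ap.card = degA J A p := rfl
        have hA'N : A'.card ≤ N := by omega
        obtain ⟨Q, S, hQsub, hii, hiii, hiv, hv⟩ :=
          IHN J A' (P.erase p) hA'N (fun i' hi' => hcard i' (hA'sub hi'))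
        refine ⟨Q, S, hQsub.trans hA'sub, hii, ?_, hiv, ?_⟩
        · intro q hq x hx
          obtain ⟨hx1, hx2⟩ := Finset.mem_inter.mp hx
          by_cases hxp : x = p
          · exfalso
            have hq' : q ∈ A' := hQsub hq
            exact (Finset.mem_sdiff.mp hq').2
              (Finset.mem_filter.mpr ⟨(Finset.mem_sdiff.mp hq').1, hxp ▸ hx1⟩)
          · exact hiii q hq (Finset.mem_inter.mpr ⟨hx1, Finset.mem_erase.mpr ⟨hxp, hx2⟩⟩)
        · have hsum : pcost K (t+1) J A (P.erase p) + min ((degA J A p:ℝ)) (th K (t+1)) =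
              pcost K (t+1) J A P := by
            unfold pcost
            exact Finset.sum_erase_add P _ hp
          have hminp : min ((degA J A p:ℝ)) (th K (t+1)) = (Ap.card:ℝ) := by
            rw [hApcard]
            exact min_eq_left (le_of_lt hdlt)
          have hpm : pcost K (t+1) J A' (P.erase p) ≤ pcost K (t+1) J A (P.erase p) :=
            pcost_mono K _ J hA'sub _
          have hcA : (A.card:ℝ) = (A'.card:ℝ) + (Ap.card:ℝ) := by
            rw [← hcards]; push_cast; ring
          linarith [hv]
      by_cases hB : (Finset.univ.filter (fun j => th K (t+1) ≤ (degA J A j : ℝ))).Nonempty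
      · -- C2: batch-commit all heavy elements
        classical
        set th1 := th K (t+1) with hth1def
        set B := Finset.univ.filter (fun j => th1 ≤ (degA J A j : ℝ)) with hBdef
        have hθ'nn : 0 ≤ th K t := th_nn K hK t
        have hθnn : 0 ≤ th1 := th_nn K hK (t+1)
        have hLatnn : 0 ≤ La K t := La_nn K hK t
        have hLat1 : 1 ≤ La K t := La_one K hK t
        have htc : (0:ℝ) ≤ (t:ℝ) := Nat.cast_nonneg t
        have hK0 : (0:ℝ) ≤ K := le_trans zero_le_one hK
        have hXdef : th1 = K * (La K t + 2*((t:ℝ)+1)*th K t) := th_succ K t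
        have hX1 : (1:ℝ) ≤ La K t + 2*((t:ℝ)+1)*th K t := by nlinarith
        have hth11 : (1:ℝ) ≤ th1 := by nlinarith
        -- the heavy-touching part G
        set G := A.filter (fun i => (J i ∩ B).Nonempty) with hGdef
        have hGsub : G ⊆ A := Finset.filter_subset _ _
        -- oracle for aux
        have oracle : ∀ k' ≤ t, ∀ (J' : Fin n → Finset (Fin m)) (A' : Finset (Fin n))
            (P' : Finset (Fin m)), (∀ i ∈ A', (J' i).card ≤ k') → Goal K k' J' A' P' := by
          intro k' hk' J' A' P' hc
          exact IHk k' (by omega) A'.card J' A' P' le_rfl hc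
        have hypG : ∀ i ∈ G, 1 ≤ (J i ∩ B).card ∧ (J i ∩ B).card ≤ t+1 ∧ (J i).card ≤ t+1 := by
          intro i hi
          obtain ⟨hiA, hne⟩ := Finset.mem_filter.mp hi
          refine ⟨Finset.card_pos.mpr hne, ?_, hcard i hiA⟩
          exact le_trans (Finset.card_le_card Finset.inter_subset_left) (hcard i hiA)
        obtain ⟨QA, SA, hQAsub, hiiA, _, hivA, hvA⟩ :=
          aux K hK t oracle J B (t+1) le_rfl G ∅ hypG
        set U2 := QA.biUnion (fun q => (J q \ B) \ SA) with hU2def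
        set A' := A \ G with hA'def
        set P' := (P \ B) ∪ U2 with hP'def
        -- G nonempty
        obtain ⟨j0, hj0⟩ := hB
        have hj0' : th1 ≤ (degA J A j0 : ℝ) := (Finset.mem_filter.mp hj0).2
        have hdj0 : 0 < degA J A j0 := by
          by_contra h
          push_neg at h
          have h0 : degA J A j0 = 0 := by omega
          rw [h0] at hj0'
          norm_num at hj0'
          linarith
        have hGne : G.Nonempty := by
          have : (A.filter (fun i => j0 ∈ J i)).Nonempty := Finset.card_pos.mp hdj0
          obtain ⟨i0, hi0⟩ := this
          obtain ⟨hi0A, hi0j⟩ := Finset.mem_filter.mp hi0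
          exact ⟨i0, Finset.mem_filter.mpr ⟨hi0A,
            ⟨j0, Finset.mem_inter.mpr ⟨hi0j, hj0⟩⟩⟩⟩
        have hA'N : A'.card ≤ N := by
          have h1 : A'.card + G.card = A.card := Finset.card_sdiff_add_card_eq_card hGsub
          have h2 : 0 < G.card := Finset.card_pos.mpr hGne
          omega
        obtain ⟨Qc, Sc, hQcsub, hiic, hiiic, hivc, hvc⟩ :=
          IHN J A' P' hA'N (fun i hi => hcard i (Finset.mem_sdiff.mp hi).1)
        have hdQ : Disjoint QA Qc := by
          have hd : Disjoint G A' := by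
            rw [hA'def]
            exact Finset.disjoint_sdiff
          exact hd.mono hQAsub hQcsub
        -- dead pendings outside B
        have hP0B : ∀ p ∈ P, p ∉ B → degA J A p = 0 := by
          intro p hp hpB
          by_contra h
          have hpos : 0 < degA J A p := Nat.pos_of_ne_zero h
          have hlt : (degA J A p : ℝ) < th1 := by
            by_contra h2
            push_neg at h2
            exact hpB (Finset.mem_filter.mpr ⟨Finset.mem_univ p, h2⟩)
          exact hC1 ⟨p, hp, hpos, hlt⟩
        refine ⟨QA ∪ Qc, B ∪ SA ∪ Sc,
          Finset.union_subset (hQAsub.trans hGsub) (hQcsub.trans Finset.sdiff_subset),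
          ?_, ?_, ?_, ?_⟩
        · -- pairwise
          intro q₁ h₁ q₂ h₂ hne
          rcases Finset.mem_union.mp h₁ with h₁' | h₁' <;>
            rcases Finset.mem_union.mp h₂ with h₂' | h₂'
          · intro x hx
            obtain ⟨hx1, hx2⟩ := Finset.mem_inter.mp hx
            by_cases hxB : x ∈ B
            · exact Finset.mem_union_left _ (Finset.mem_union_left _ hxB)
            · have := hiiA q₁ h₁' q₂ h₂' hne (Finset.mem_inter.mpr
                ⟨Finset.mem_sdiff.mpr ⟨hx1, hxB⟩, Finset.mem_sdiff.mpr ⟨hx2, hxB⟩⟩)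
              exact Finset.mem_union_left _ (Finset.mem_union_right _ this)
          · intro x hx
            obtain ⟨hx1, hx2⟩ := Finset.mem_inter.mp hx
            by_cases hxB : x ∈ B
            · exact Finset.mem_union_left _ (Finset.mem_union_left _ hxB)
            · by_cases hxS : x ∈ SA
              · exact Finset.mem_union_left _ (Finset.mem_union_right _ hxS)
              · have hxU : x ∈ U2 := Finset.mem_biUnion.mpr
                  ⟨q₁, h₁', Finset.mem_sdiff.mpr ⟨Finset.mem_sdiff.mpr ⟨hx1, hxB⟩, hxS⟩⟩
                exact Finset.mem_union_right _ (hiiic q₂ h₂'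
                  (Finset.mem_inter.mpr ⟨hx2, Finset.mem_union_right _ hxU⟩))
          · intro x hx
            obtain ⟨hx1, hx2⟩ := Finset.mem_inter.mp hx
            by_cases hxB : x ∈ B
            · exact Finset.mem_union_left _ (Finset.mem_union_left _ hxB)
            · by_cases hxS : x ∈ SA
              · exact Finset.mem_union_left _ (Finset.mem_union_right _ hxS)
              · have hxU : x ∈ U2 := Finset.mem_biUnion.mpr
                  ⟨q₂, h₂', Finset.mem_sdiff.mpr ⟨Finset.mem_sdiff.mpr ⟨hx2, hxB⟩, hxS⟩⟩
                exact Finset.mem_union_right _ (hiiic q₁ h₁'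
                  (Finset.mem_inter.mpr ⟨hx1, Finset.mem_union_right _ hxU⟩))
          · exact (hiic q₁ h₁' q₂ h₂' hne).trans Finset.subset_union_right
        · -- pendings of P
          intro q hq
          rcases Finset.mem_union.mp hq with hq' | hq'
          · intro x hx
            obtain ⟨hx1, hx2⟩ := Finset.mem_inter.mp hx
            by_cases hxB : x ∈ B
            · exact Finset.mem_union_left _ (Finset.mem_union_left _ hxB)
            · exfalso
              have h0 := hP0B x hx2 hxB
              have := degA_pos J A (hGsub (hQAsub hq')) hx1
              omega
          · intro x hx
            obtain ⟨hx1, hx2⟩ := Finset.mem_inter.mp hx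
            by_cases hxB : x ∈ B
            · exact Finset.mem_union_left _ (Finset.mem_union_left _ hxB)
            · exact Finset.mem_union_right _ (hiiic q hq' (Finset.mem_inter.mpr
                ⟨hx1, Finset.mem_union_left _ (Finset.mem_sdiff.mpr ⟨hx2, hxB⟩)⟩))
        · -- payment
          set cov := ∑ q ∈ QA, ((J q ∩ B).card : ℝ) with hcovdef
          set C1 := La K t + 2*(t:ℝ)*th K t with hC1def
          have hC1nn : (0:ℝ) ≤ C1 := by nlinarith
          have hC1pos : (0:ℝ) < C1 := by nlinarith
          have hcovnn : 0 ≤ cov := Finset.sum_nonneg fun q _ => Nat.cast_nonneg _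
          have hvA' : (∑ i ∈ G, ((J i ∩ B).card : ℝ)) ≤ C1 * cov := by
            have := hvA
            simp only [Finset.card_empty, Nat.cast_zero, mul_zero] at this
            linarith [this]
          have hds : (∑ j ∈ B, (degA J A j : ℝ)) = ∑ i ∈ A, ((J i ∩ B).card : ℝ) := by
            have h0 := degA_sum J A B
            have h1 : ((∑ j ∈ B, degA J A j : ℕ) : ℝ) = ((∑ i ∈ A, (J i ∩ B).card : ℕ) : ℝ) := by
              exact_mod_cast h0
            push_cast at h1
            exact h1
          have hAG : (∑ i ∈ A, ((J i ∩ B).card : ℝ)) = ∑ i ∈ G, ((J i ∩ B).card : ℝ) := by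
            symm
            apply Finset.sum_subset hGsub
            intro i hiA hiG
            have : ¬(J i ∩ B).Nonempty := fun hne => hiG (Finset.mem_filter.mpr ⟨hiA, hne⟩)
            rw [Finset.not_nonempty_iff_eq_empty.mp this]
            simp
          have hBsum : th1 * (B.card:ℝ) ≤ ∑ j ∈ B, (degA J A j : ℝ) := by
            have h2 : ∀ j ∈ B, th1 ≤ (degA J A j : ℝ) := fun j hj => (Finset.mem_filter.mp hj).2
            calc th1 * (B.card:ℝ) = ∑ _j ∈ B, th1 := by
                  rw [Finset.sum_const, nsmul_eq_mul]; ring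
            _ ≤ ∑ j ∈ B, (degA J A j : ℝ) := Finset.sum_le_sum h2
          have hKB : K * (B.card:ℝ) ≤ cov := by
            have e1 : th1 * (B.card:ℝ) ≤ C1 * cov := by
              rw [hds, hAG] at hBsum
              linarith [hvA']
            have e2 : K * C1 ≤ th1 := by
              rw [hXdef]
              have : C1 ≤ La K t + 2*((t:ℝ)+1)*th K t := by nlinarith
              nlinarith
            have e3 : (K * C1) * (B.card:ℝ) ≤ th1 * (B.card:ℝ) :=
              mul_le_mul_of_nonneg_right e2 (Nat.cast_nonneg _)
            have e4 : C1 * (K * (B.card:ℝ)) ≤ C1 * cov := by nlinarith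
            exact le_of_mul_le_mul_left e4 hC1pos
          have hSle : (((B ∪ SA ∪ Sc)).card : ℝ) ≤ (B.card:ℝ) + SA.card + Sc.card := by
            have u1 : (B ∪ SA ∪ Sc).card ≤ (B ∪ SA).card + Sc.card := Finset.card_union_le _ _
            have u2 : (B ∪ SA).card ≤ B.card + SA.card := Finset.card_union_le _ _
            push_cast
            exact_mod_cast le_trans u1 (Nat.add_le_add_right u2 _)
          have hperA : ∀ q ∈ QA, ((J q ∩ B).card : ℝ) + (((J q \ B) ∩ SA).card : ℝ) ≤
              ((J q ∩ (B ∪ SA ∪ Sc)).card : ℝ) := by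
            intro q _
            have hd : Disjoint (J q ∩ B) ((J q \ B) ∩ SA) := by
              apply Finset.disjoint_left.mpr
              intro x hx1 hx2
              exact (Finset.mem_sdiff.mp (Finset.mem_inter.mp hx2).1).2
                (Finset.mem_inter.mp hx1).2
            have hsub : (J q ∩ B) ∪ ((J q \ B) ∩ SA) ⊆ J q ∩ (B ∪ SA ∪ Sc) := by
              intro x hx
              rcases Finset.mem_union.mp hx with hx' | hx'
              · obtain ⟨a1, a2⟩ := Finset.mem_inter.mp hx'
                exact Finset.mem_inter.mpr ⟨a1,
                  Finset.mem_union_left _ (Finset.mem_union_left _ a2)⟩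
              · obtain ⟨a1, a2⟩ := Finset.mem_inter.mp hx'
                exact Finset.mem_inter.mpr ⟨(Finset.mem_sdiff.mp a1).1,
                  Finset.mem_union_left _ (Finset.mem_union_right _ a2)⟩
            have := Finset.card_le_card hsub
            rw [Finset.card_union_of_disjoint hd] at this
            exact_mod_cast this
          have hperC : ∀ q ∈ Qc, ((J q ∩ Sc).card : ℝ) ≤ ((J q ∩ (B ∪ SA ∪ Sc)).card : ℝ) := by
            intro q _
            exact_mod_cast Finset.card_le_card (Finset.inter_subset_inter
              (Finset.Subset.refl _) Finset.subset_union_right)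
          have hsA := Finset.sum_le_sum hperA
          have hsC := Finset.sum_le_sum hperC
          rw [Finset.sum_union hdQ]
          have hKS := mul_le_mul_of_nonneg_left hSle hK0
          have hsplitA : ∑ q ∈ QA, (((J q ∩ B).card : ℝ) + (((J q \ B) ∩ SA).card : ℝ)) =
              cov + ∑ q ∈ QA, (((J q \ B) ∩ SA).card : ℝ) := by
            rw [Finset.sum_add_distrib]
          rw [hsplitA] at hsA
          linarith [hivA, hivc, hKB, hsA, hsC, hKS]
        · -- value
          set cov := ∑ q ∈ QA, ((J q ∩ B).card : ℝ) with hcovdef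
          set C1 := La K t + 2*(t:ℝ)*th K t with hC1def
          have hC1nn : (0:ℝ) ≤ C1 := by nlinarith
          have hvA' : (∑ i ∈ G, ((J i ∩ B).card : ℝ)) ≤ C1 * cov := by
            have := hvA
            simp only [Finset.card_empty, Nat.cast_zero, mul_zero] at this
            linarith [this]
          have hQAnn : (0:ℝ) ≤ (QA.card:ℝ) := Nat.cast_nonneg _
          have hcA : (A.card : ℝ) = (G.card:ℝ) + (A'.card:ℝ) := by
            have h1 : A'.card + G.card = A.card := Finset.card_sdiff_add_card_eq_card hGsub
            push_cast [← h1]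
            ring
          have hGle : (G.card:ℝ) ≤ ∑ i ∈ G, ((J i ∩ B).card : ℝ) := by
            calc (G.card:ℝ) = ∑ _i ∈ G, (1:ℝ) := by
                  rw [Finset.sum_const, nsmul_eq_mul]; ring
            _ ≤ _ := Finset.sum_le_sum (fun i hi => by
                  have := (hypG i hi).1
                  exact_mod_cast Nat.one_le_cast.mpr this)
          have hcovle : cov ≤ ((t:ℝ)+1) * (QA.card:ℝ) := by
            calc cov ≤ ∑ _q ∈ QA, ((t:ℝ)+1) := Finset.sum_le_sum (fun q hq => by
                  have h2 := (hypG q (hQAsub hq)).2.1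
                  have : ((J q ∩ B).card : ℝ) ≤ ((t+1:ℕ):ℝ) := by exact_mod_cast h2
                  push_cast at this
                  linarith)
            _ = ((t:ℝ)+1) * (QA.card:ℝ) := by
                  rw [Finset.sum_const, nsmul_eq_mul]; ring
          have hU2card : (U2.card : ℝ) ≤ (t:ℝ) * (QA.card:ℝ) := by
            have h1 : U2.card ≤ ∑ q ∈ QA, ((J q \ B) \ SA).card := Finset.card_biUnion_le
            have h2 : ∑ q ∈ QA, ((J q \ B) \ SA).card ≤ ∑ _q ∈ QA, t := by
              apply Finset.sum_le_sum
              intro q hq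
              have h3 := (hypG q (hQAsub hq)).1
              have h4 := (hypG q (hQAsub hq)).2.2
              have h5 := Finset.card_inter_add_card_sdiff (J q) B
              have h6 : (J q \ B).card ≤ t := by omega
              exact le_trans (Finset.card_le_card Finset.sdiff_subset) h6
            have h3 : ∑ _q ∈ QA, t = QA.card * t := by
              rw [Finset.sum_const, smul_eq_mul]
            have h7 : U2.card ≤ QA.card * t := by omega
            calc (U2.card:ℝ) ≤ ((QA.card * t : ℕ):ℝ) := by exact_mod_cast h7
            _ = (t:ℝ) * QA.card := by push_cast; ring
          have hpco : pcost K (t+1) J A' P' ≤ th1 * ((t:ℝ) * (QA.card:ℝ)) := by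
            have hsp : pcost K (t+1) J A' P' ≤
                pcost K (t+1) J A' (P \ B) + pcost K (t+1) J A' U2 :=
              sum_union_le' (fun x => le_min (Nat.cast_nonneg _) hθnn)
            have hz : pcost K (t+1) J A' (P \ B) = 0 := by
              apply Finset.sum_eq_zero
              intro p hp
              obtain ⟨hp1, hp2⟩ := Finset.mem_sdiff.mp hp
              have h0 : degA J A p = 0 := hP0B p hp1 hp2
              have h1 : degA J A' p = 0 := by
                have hmono : degA J A' p ≤ degA J A p :=
                  degA_mono J (by rw [hA'def]; exact Finset.sdiff_subset) p
                omega
              rw [h1]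
              simp [hθnn, th_nn K hK (t+1)]
            have hle := pcost_le K hK (t+1) J A' U2
            have e := mul_le_mul_of_nonneg_right hU2card hθnn
            calc pcost K (t+1) J A' P' ≤ 0 + (U2.card:ℝ) * th1 := by
                  rw [← hz]; linarith [hsp, hle]
            _ ≤ th1 * ((t:ℝ) * (QA.card:ℝ)) := by nlinarith
          -- scalar inequality
          have hscalar : C1 * ((t:ℝ)+1) + (t:ℝ) * th1 ≤ La K (t+1) := by
            set X := La K t + 2*((t:ℝ)+1)*th K t with hXd
            have hXnn : (0:ℝ) ≤ X := by nlinarith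
            have hC1X : C1 ≤ X := by nlinarith
            have hXth : X ≤ th1 := by
              rw [hXdef]
              nlinarith
            have hLa1 : La K (t+1) = La K t + 2*((t:ℝ)+1)*th1 + 1 := La_succ K t
            have e1 : C1 * ((t:ℝ)+1) ≤ X * ((t:ℝ)+1) :=
              mul_le_mul_of_nonneg_right hC1X (by linarith)
            have e2 : X * ((t:ℝ)+1) ≤ th1 * ((t:ℝ)+1) :=
              mul_le_mul_of_nonneg_right hXth (by linarith)
            nlinarith
          have hm1 : C1 * cov ≤ C1 * (((t:ℝ)+1) * (QA.card:ℝ)) :=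
            mul_le_mul_of_nonneg_left hcovle hC1nn
          have hm2 := mul_le_mul_of_nonneg_right hscalar hQAnn
          have hQQ : (((QA ∪ Qc).card : ℕ) : ℝ) = (QA.card:ℝ) + (Qc.card:ℝ) := by
            rw [Finset.card_union_of_disjoint hdQ]
            push_cast
            ring
          have hpc0 := pcost_nonneg K hK (t+1) J A P
          rw [hQQ, hcA]
          have hLaA : (0:ℝ) ≤ La K (t+1) := La_nn K hK (t+1)
          nlinarith [hvc, hpco, hGle, hvA', hm1, hm2]
      · -- C4: no heavy element, all pendings dead
        have hP0 : ∀ p ∈ P, degA J A p = 0 := by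
          intro p hp
          by_contra h
          have hpos : 0 < degA J A p := Nat.pos_of_ne_zero h
          have hnlt : ¬((degA J A p : ℝ) < th K (t+1)) := fun hlt => hC1 ⟨p, hp, hpos, hlt⟩
          push_neg at hnlt
          exact hB ⟨p, Finset.mem_filter.mpr ⟨Finset.mem_univ p, hnlt⟩⟩
        obtain ⟨i, hi⟩ := Finset.nonempty_iff_ne_empty.mpr hA0
        set A' := A.erase i with hA'def
        have hA'sub : A' ⊆ A := Finset.erase_subset i A
        have hA'card : A'.card + 1 = A.card := Finset.card_erase_add_one hi
        have hA'N : A'.card ≤ N := by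
          have := hA
          omega
        obtain ⟨Q', S', hQ'sub, hii', hiii', hiv', hv'⟩ :=
          IHN J A' (P ∪ J i) hA'N (fun i' hi' => hcard i' (hA'sub hi'))
        have hiQ' : i ∉ Q' := fun h => (Finset.notMem_erase i A) (hQ'sub h)
        refine ⟨insert i Q', S', ?_, ?_, ?_, ?_, ?_⟩
        · exact Finset.insert_subset hi (hQ'sub.trans hA'sub)
        · intro q₁ h₁ q₂ h₂ hne
          rcases Finset.mem_insert.mp h₁ with rfl | h₁' <;>
            rcases Finset.mem_insert.mp h₂ with rfl | h₂'
          · exact absurd rfl hne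
          · intro x hx
            obtain ⟨hx1, hx2⟩ := Finset.mem_inter.mp hx
            exact hiii' q₂ h₂' (Finset.mem_inter.mpr ⟨hx2, Finset.mem_union_right _ hx1⟩)
          · intro x hx
            obtain ⟨hx1, hx2⟩ := Finset.mem_inter.mp hx
            exact hiii' q₁ h₁' (Finset.mem_inter.mpr ⟨hx1, Finset.mem_union_right _ hx2⟩)
          · exact hii' q₁ h₁' q₂ h₂' hne
        · intro q hq
          rcases Finset.mem_insert.mp hq with rfl | hq'
          · intro x hx
            obtain ⟨hx1, hx2⟩ := Finset.mem_inter.mp hx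
            exact absurd (hP0 x hx2) (degA_pos J A hi hx1).ne'
          · intro x hx
            obtain ⟨hx1, hx2⟩ := Finset.mem_inter.mp hx
            exact hiii' q hq' (Finset.mem_inter.mpr ⟨hx1, Finset.mem_union_left _ hx2⟩)
        · rw [Finset.sum_insert hiQ']
          have : (0:ℝ) ≤ ((J i ∩ S').card : ℝ) := Nat.cast_nonneg _
          linarith
        · have hsplit : pcost K (t+1) J A' (P ∪ J i) ≤
              pcost K (t+1) J A' P + pcost K (t+1) J A' (J i) :=
            sum_union_le' (fun x => le_min (Nat.cast_nonneg _) (th_nn K hK (t+1)))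
          have hm1 : pcost K (t+1) J A' P ≤ pcost K (t+1) J A P := pcost_mono K _ J hA'sub P
          have hm2 : pcost K (t+1) J A' (J i) ≤ ((t:ℝ)+1) * th K (t+1) := by
            have h1 := pcost_le K hK (t+1) J A' (J i)
            have h2 : ((J i).card : ℝ) ≤ (t:ℝ)+1 := by exact_mod_cast hcard i hi
            have h3 := th_nn K hK (t+1)
            nlinarith
          have hcQ : ((insert i Q').card : ℝ) = (Q'.card : ℝ) + 1 := by
            rw [Finset.card_insert_of_notMem hiQ']
            push_cast
            ring
          have hcA : (A.card : ℝ) = (A'.card : ℝ) + 1 := by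
            rw [← hA'card]; push_cast; ring
          have hLa := La_succ K t
          have hth := th_nn K hK (t+1)
          have hLat := La_nn K hK t
          have htc : (0:ℝ) ≤ (t:ℝ) := Nat.cast_nonneg t
          rw [hcQ, hcA]
          nlinarith [hv']

set_option maxHeartbeats 1000000 in
lemma La_bound (d : ℕ) (hd : 1 ≤ d) (β : ℝ) (hβ : 1 ≤ β) :
    ∀ k ≤ d, (2*(d:ℝ)*β+1) * th ((d:ℝ)*β) k ≤ (2*(d:ℝ)*β+1)^(2*k) ∧
      La ((d:ℝ)*β) k ≤ (2*(d:ℝ)*β+1)^(2*k) := by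
  have hdc : (1:ℝ) ≤ (d:ℝ) := by exact_mod_cast hd
  have hK : (1:ℝ) ≤ (d:ℝ)*β := by nlinarith
  set K := (d:ℝ)*β with hKdef
  set c := 2*(d:ℝ)*β+1 with hcdef
  have hc3 : (3:ℝ) ≤ c := by rw [hcdef]; nlinarith
  have hc0 : (0:ℝ) < c := by linarith
  have h2K : 2*K = c - 1 := by rw [hKdef, hcdef]; ring
  intro k
  induction k with
  | zero =>
    intro _
    constructor
    · show c * th K 0 ≤ c^(2*0)
      have : th K 0 = 0 := rfl
      rw [this]
      norm_num
    · show La K 0 ≤ c^(2*0)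
      have : La K 0 = 1 := rfl
      rw [this]
      norm_num
  | succ k IH =>
    intro hk
    obtain ⟨ih1, ih2⟩ := IH (by omega)
    have hkd : (k:ℝ)+1 ≤ (d:ℝ) := by exact_mod_cast hk
    have hp0 : (0:ℝ) < c^(2*k) := by positivity
    have hp1 : (1:ℝ) ≤ c^(2*k) := one_le_pow₀ (by linarith)
    have hthk := th_nn K hK k
    have hthk1 := th_nn K hK (k+1)
    have hLak := La_one K hK k
    have h2k1 : 2*((k:ℝ)+1) ≤ c - 1 := by nlinarith
    have s1 : K*c + 2*((k:ℝ)+1)*K ≤ c^2 := by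
      have b1 : 2*((k:ℝ)+1)*K ≤ (c-1)*K := mul_le_mul_of_nonneg_right h2k1 (by linarith)
      nlinarith [b1, h2K, hc3]
    have e0 := th_succ K k
    have goal1 : c * th K (k+1) ≤ c^(2*(k+1)) := by
      have step1 : c * th K (k+1) = K*(c*La K k) + 2*((k:ℝ)+1)*K*(c*th K k) := by
        rw [e0]; ring
      have m1 : K*(c*La K k) ≤ K*(c*c^(2*k)) :=
        mul_le_mul_of_nonneg_left (mul_le_mul_of_nonneg_left ih2 (by linarith)) (by linarith)
      have m2 : 2*((k:ℝ)+1)*K*(c*th K k) ≤ 2*((k:ℝ)+1)*K*(c^(2*k)) := by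
        apply mul_le_mul_of_nonneg_left ih1
        have : (0:ℝ) ≤ (k:ℝ) := Nat.cast_nonneg k
        nlinarith
      have m3 : (K*c + 2*((k:ℝ)+1)*K)*c^(2*k) ≤ c^2*c^(2*k) :=
        mul_le_mul_of_nonneg_right s1 (le_of_lt hp0)
      have epow : c^(2*(k+1)) = c^2*c^(2*k) := by
        rw [← pow_add]
        congr 1
        omega
      rw [step1, epow]
      linarith [m1, m2, m3]
    refine ⟨goal1, ?_⟩
    have epow2 : c^(2*(k+1)) = c*c^(2*k+1) := by
      rw [show 2*(k+1) = (2*k+1)+1 by omega]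
      exact pow_succ' c (2*k+1)
    have hth1le : th K (k+1) ≤ c^(2*k+1) := by
      rw [epow2] at goal1
      exact le_of_mul_le_mul_left goal1 hc0
    have hLa1 := La_succ K k
    have m4 : 2*((k:ℝ)+1)*th K (k+1) ≤ (c-1)*c^(2*k+1) := by
      have a1 : 2*((k:ℝ)+1)*th K (k+1) ≤ (c-1)*th K (k+1) :=
        mul_le_mul_of_nonneg_right h2k1 hthk1
      have a2 : (c-1)*th K (k+1) ≤ (c-1)*c^(2*k+1) :=
        mul_le_mul_of_nonneg_left hth1le (by linarith)
      linarith
    have epow3 : c^(2*k+1) = c*c^(2*k) := pow_succ' c (2*k)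
    have a3 : 2*c^(2*k) ≤ (c-1)*c^(2*k) :=
      mul_le_mul_of_nonneg_right (by linarith) (le_of_lt hp0)
    rw [hLa1, epow2]
    linarith [m4, ih2, hp1, a3, epow3]

end EGI


theorem stmt16 (d n m : ℕ) (hd : 1 ≤ d) (β lam : ℝ) (hβ : 1 ≤ β) (hlam : 1 ≤ lam)
    (I : Fin n → Finset (Fin m)) (hI : ∀ i, (I i).card ≤ d)
    (h : 2 * (d : ℝ) * (2 * (d : ℝ) * β + 1) ^ (2 * d) ≤ lam) :
    ∃ (S : Finset (Fin m)) (r : ℕ) (R : Finset (Fin n)),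
      R.card = r ∧
      (∀ i ∈ R, ∀ j ∈ R, i ≠ j → Disjoint (I i \ S) (I j \ S)) ∧
      (S.card : ℝ) ≤ (r : ℝ) / β ∧ (n : ℝ) / lam ≤ (r : ℝ) := by
  classical
  have hd1 : (1:ℝ) ≤ (d:ℝ) := by exact_mod_cast hd
  have hK : (1:ℝ) ≤ (d:ℝ)*β := by nlinarith
  obtain ⟨Q, S, hQsub, hii, hiii, hiv, hv⟩ :=
    EGI.main ((d:ℝ)*β) hK d n I Finset.univ ∅ (by simp) (fun i _ => hI i)
  refine ⟨S, Q.card, Q, rfl, ?_, ?_, ?_⟩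
  · intro i hi j hj hij
    rw [Finset.disjoint_left]
    intro x hx hx2
    obtain ⟨hx1, hxS⟩ := Finset.mem_sdiff.mp hx
    obtain ⟨hx1', _⟩ := Finset.mem_sdiff.mp hx2
    exact hxS (hii i hi j hj hij (Finset.mem_inter.mpr ⟨hx1, hx1'⟩))
  · have h1 : ∑ q ∈ Q, ((I q ∩ S).card : ℝ) ≤ (d:ℝ) * Q.card := by
      calc ∑ q ∈ Q, ((I q ∩ S).card : ℝ) ≤ ∑ _q ∈ Q, (d:ℝ) := by
            apply Finset.sum_le_sum
            intro q _
            have : (I q ∩ S).card ≤ d :=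
              le_trans (Finset.card_le_card Finset.inter_subset_left) (hI q)
            exact_mod_cast this
      _ = (d:ℝ)*Q.card := by rw [Finset.sum_const, nsmul_eq_mul]; ring
    have h2 : (d:ℝ)*β*(S.card:ℝ) ≤ (d:ℝ)*Q.card := le_trans hiv h1
    have hd0 : (0:ℝ) < (d:ℝ) := by linarith
    have h3 : β*(S.card:ℝ) ≤ (Q.card:ℝ) := by
      have h4 : (d:ℝ)*(β*(S.card:ℝ)) ≤ (d:ℝ)*(Q.card:ℝ) := by nlinarith
      exact le_of_mul_le_mul_left h4 hd0
    rw [le_div_iff₀ (by linarith : (0:ℝ) < β)]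
    nlinarith
  · have hv' : (n:ℝ) ≤ EGI.La ((d:ℝ)*β) d * Q.card := by
      have hcu : ((Finset.univ : Finset (Fin n)).card : ℝ) = (n:ℝ) := by simp
      have hpe : EGI.pcost ((d:ℝ)*β) d I Finset.univ ∅ = 0 := by
        simp [EGI.pcost]
      rw [hcu, hpe] at hv
      linarith
    have hLab := (EGI.La_bound d hd β hβ d le_rfl).2
    have hlam0 : (0:ℝ) < lam := by linarith
    rw [div_le_iff₀ hlam0]
    have hcpow : (0:ℝ) ≤ (2*(d:ℝ)*β+1)^(2*d) := by positivity
    have hLlam : EGI.La ((d:ℝ)*β) d ≤ lam := by nlinarith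
    have hQnn : (0:ℝ) ≤ (Q.card:ℝ) := Nat.cast_nonneg _
    nlinarith [hv', mul_le_mul_of_nonneg_right hLlam hQnn]
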